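/- Let A be a unital C*-algebra. Then A fails to have Invariant Basis Number if and only if there exist an integer k ≥ 1, an integer r ≥ 1, a projection p in M_r(A), and an r × (r + k) matrix v over A such that v * vᴴ = p and vᴴ * v is the block-diagonal (r+k) × (r+k) matrix diag(p, 1_k). (This is the matrix form of the statement that A lacks IBN if and only if the class [1_A]₀ has finite order in K₀(A).) -/

import Mathlib

open Matrix

/-- An `m × n` matrix `U` over a `*`-ring is a *rectangular unitary* if
`U * Uᴴ = 1` and `Uᴴ * U = 1`. -/
def IsRectangularUnitary {A : Type*} [Ring A] [StarRing A] {m n : ℕ}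
    (U : Matrix (Fin m) (Fin n) A) : Prop :=
  U * Uᴴ = 1 ∧ Uᴴ * U = 1

/-- A unital C*-algebra has *Invariant Basis Number* if every rectangular
unitary over it is square. -/
def HasIBN (A : Type*) [Ring A] [StarRing A] : Prop :=
  ∀ m n : ℕ, (∃ U : Matrix (Fin m) (Fin n) A, IsRectangularUnitary U) → m = n

/-- Over a C*-algebra, `x * xᴴ = 0` implies `x = 0`, even for rectangular
matrices. -/
lemma Matrix.eq_zero_of_mul_conjTranspose_self_eq_zero
    {A : Type*} [NormedRing A] [StarRing A] [CStarRing A] [CompleteSpace A]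
    [NormedAlgebra ℂ A] [StarModule ℂ A] {m n : Type*} [Fintype n]
    (x : Matrix m n A) (h : x * xᴴ = 0) : x = 0 := by
  letI : CStarAlgebra A := {}
  letI : PartialOrder A := CStarAlgebra.spectralOrder A
  letI : StarOrderedRing A := CStarAlgebra.spectralOrderedRing A
  ext i j
  have hdiag : ∑ l, x i l * star (x i l) = 0 := by
    have := congrFun (congrFun h i) i
    simpa [Matrix.mul_apply, Matrix.conjTranspose_apply] using this
  have hterm :=
    (Finset.sum_eq_zero_iff_of_nonneg
      (fun l _ => mul_star_self_nonneg (x i l))).mp hdiag j (Finset.mem_univ j)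
  exact (CStarRing.mul_star_self_eq_zero_iff (x i j)).mp hterm

/-- A unital C*-algebra `A` fails to have Invariant Basis Number if and only if
there are `k, r ≥ 1`, a projection `p ∈ M_r(A)`, and an `r × (r + k)` matrix `v`
over `A` with `v * vᴴ = p` and `vᴴ * v = diag(p, 1_k)`.  (This is the matrix
form of the statement that `A` lacks IBN iff `[1_A]₀` has finite order in
`K₀(A)`.) -/
theorem not_hasIBN_iff_exists_projection_stably_equiv_shift
    (A : Type*) [NormedRing A] [StarRing A] [CStarRing A] [CompleteSpace A]
    [NormedAlgebra ℂ A] [StarModule ℂ A] :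
    ¬ HasIBN A ↔
      ∃ (k r : ℕ), 1 ≤ k ∧ 1 ≤ r ∧
        ∃ (p : Matrix (Fin r) (Fin r) A)
          (v : Matrix (Fin r) (Fin r ⊕ Fin k) A),
          pᴴ = p ∧ p * p = p ∧
          v * vᴴ = p ∧ vᴴ * v = Matrix.fromBlocks p 0 0 1 := by
  constructor
  · -- forward direction
    intro h
    simp only [HasIBN, not_forall] at h
    obtain ⟨m, n, hU, hmn⟩ := h
    -- reduce to the case m < n
    have key : ∀ m n : ℕ, m < n →
        (∃ U : Matrix (Fin m) (Fin n) A, IsRectangularUnitary U) →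
        ∃ (k r : ℕ), 1 ≤ k ∧ 1 ≤ r ∧
          ∃ (p : Matrix (Fin r) (Fin r) A)
            (v : Matrix (Fin r) (Fin r ⊕ Fin k) A),
            pᴴ = p ∧ p * p = p ∧
            v * vᴴ = p ∧ vᴴ * v = Matrix.fromBlocks p 0 0 1 := by
      intro m n hmn ⟨U, hU1, hU2⟩
      rcases Nat.eq_zero_or_pos m with hm | hm
      · -- m = 0 : then 1 = 0 in A, so A is trivial and everything holds
        subst hm
        have h10 : (0 : A) = 1 := by
          have := congrFun (congrFun hU2 ⟨0, hmn⟩) ⟨0, hmn⟩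
          simp only [Matrix.mul_apply, Matrix.one_apply_eq] at this
          simpa using this
        haveI : Subsingleton A := subsingleton_of_zero_eq_one h10
        exact ⟨1, 1, le_refl 1, le_refl 1, 1, 0,
          Subsingleton.elim _ _, Subsingleton.elim _ _,
          Subsingleton.elim _ _, Subsingleton.elim _ _⟩
      · obtain ⟨k, hkn⟩ := Nat.exists_eq_add_of_lt hmn
        have hkn' : n = m + (k + 1) := by omega
        subst hkn'
        refine ⟨k + 1, m, by omega, hm, 1,
          U.submatrix id (finSumFinEquiv : Fin m ⊕ Fin (k+1) ≃ Fin (m + (k+1))), ?_, ?_, ?_, ?_⟩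
        · simp
        · simp
        · rw [Matrix.conjTranspose_submatrix, Matrix.submatrix_mul_equiv, hU1,
            Matrix.submatrix_id_id]
        · rw [Matrix.conjTranspose_submatrix, Matrix.fromBlocks_one,
            ← Matrix.submatrix_mul Uᴴ U ⇑finSumFinEquiv id ⇑finSumFinEquiv Function.bijective_id,
            hU2, Matrix.submatrix_one_equiv]
    rcases lt_or_gt_of_ne hmn with h' | h'
    · exact key m n h' hU
    · obtain ⟨U, hU1, hU2⟩ := hU
      exact key n m h' ⟨Uᴴ, by simpa using hU2, by simpa using hU1⟩
  · -- backward direction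
    rintro ⟨k, r, hk, hr, p, v, hps, hp2, hvv, hvsv⟩ hIBN
    -- p * v = v
    have hpv : p * v = v := by
      have h0 : ((1 - p) * v) * ((1 - p) * v)ᴴ = 0 := by
        have hH : ((1 - p) * v)ᴴ = vᴴ * (1 - p) := by
          simp [Matrix.conjTranspose_sub, hps]
        rw [hH, Matrix.mul_assoc, ← Matrix.mul_assoc v, hvv, Matrix.sub_mul,
          Matrix.one_mul, Matrix.mul_sub, Matrix.mul_sub, hp2]
        simp
      have := Matrix.eq_zero_of_mul_conjTranspose_self_eq_zero _ h0
      rw [Matrix.sub_mul, Matrix.one_mul, sub_eq_zero] at this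
      exact this.symm
    set v₁ : Matrix (Fin r) (Fin r) A := v.submatrix id Sum.inl with hv₁
    set v₂ : Matrix (Fin r) (Fin k) A := v.submatrix id Sum.inr with hv₂
    have hv : v = Matrix.fromCols v₁ v₂ := by
      ext i j; cases j <;> rfl
    -- block equations
    have hblocks : Matrix.fromBlocks (v₁ᴴ * v₁) (v₁ᴴ * v₂) (v₂ᴴ * v₁) (v₂ᴴ * v₂) =
        Matrix.fromBlocks p 0 0 1 := by
      rw [← Matrix.fromRows_mul_fromCols, ← Matrix.conjTranspose_fromCols_eq_fromRows_conjTranspose,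
        ← hv, hvsv]
    rw [Matrix.fromBlocks_inj] at hblocks
    obtain ⟨h11, h12, h21, h22⟩ := hblocks
    have hsum : v₁ * v₁ᴴ + v₂ * v₂ᴴ = p := by
      rw [← Matrix.fromCols_mul_fromRows, ← Matrix.conjTranspose_fromCols_eq_fromRows_conjTranspose,
        ← hv, hvv]
    -- componentwise form of p * v = v
    have hpv1 : p * v₁ = v₁ := by
      ext i j
      have := congrFun (congrFun hpv i) (Sum.inl j)
      simpa [Matrix.mul_apply, hv₁] using this
    have hpv2 : p * v₂ = v₂ := by
      ext i j
      have := congrFun (congrFun hpv i) (Sum.inr j)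
      simpa [Matrix.mul_apply, hv₂] using this
    -- v₁ * p = v₁
    have hv1p : v₁ * p = v₁ := by
      have h21' : v₂ᴴ * v₁ = 0 := h21
      calc v₁ * p = v₁ * (v₁ᴴ * v₁) := by rw [h11]
        _ = (v₁ * v₁ᴴ) * v₁ := by rw [Matrix.mul_assoc]
        _ = (p - v₂ * v₂ᴴ) * v₁ := by rw [← hsum, add_sub_cancel_right]
        _ = p * v₁ - v₂ * (v₂ᴴ * v₁) := by rw [Matrix.sub_mul, Matrix.mul_assoc]
        _ = v₁ := by rw [hpv1, h21', Matrix.mul_zero, sub_zero]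
    -- conjugate-transpose versions
    have hv1Hp : v₁ᴴ * p = v₁ᴴ := by
      have := congrArg Matrix.conjTranspose hpv1
      rwa [Matrix.conjTranspose_mul, hps] at this
    have hpv1H : p * v₁ᴴ = v₁ᴴ := by
      have := congrArg Matrix.conjTranspose hv1p
      rwa [Matrix.conjTranspose_mul, hps] at this
    have hv2Hp : v₂ᴴ * p = v₂ᴴ := by
      have := congrArg Matrix.conjTranspose hpv2
      rwa [Matrix.conjTranspose_mul, hps] at this
    -- the rectangular unitary
    set w : Matrix (Fin r) (Fin r) A := (1 - p) + v₁ with hw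
    have hwH : wᴴ = (1 - p) + v₁ᴴ := by
      simp [hw, Matrix.conjTranspose_add, Matrix.conjTranspose_sub, hps]
    have hwwH : w * wᴴ = (1 - p) + v₁ * v₁ᴴ := by
      rw [hw, hwH, Matrix.add_mul, Matrix.mul_add, Matrix.mul_add]
      have e1 : (1 - p) * (1 - p) = 1 - p := by
        rw [Matrix.sub_mul, Matrix.one_mul, Matrix.mul_sub, Matrix.mul_one, hp2]
        abel
      have e2 : (1 - p) * v₁ᴴ = 0 := by
        rw [Matrix.sub_mul, Matrix.one_mul, hpv1H, sub_self]
      have e3 : v₁ * (1 - p) = 0 := by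
        rw [Matrix.mul_sub, Matrix.mul_one, hv1p, sub_self]
      rw [e1, e2, e3]; abel
    have hwHw : wᴴ * w = 1 := by
      rw [hw, hwH, Matrix.add_mul, Matrix.mul_add, Matrix.mul_add]
      have e1 : (1 - p) * (1 - p) = 1 - p := by
        rw [Matrix.sub_mul, Matrix.one_mul, Matrix.mul_sub, Matrix.mul_one, hp2]
        abel
      have e2 : (1 - p) * v₁ = 0 := by
        rw [Matrix.sub_mul, Matrix.one_mul, hpv1, sub_self]
      have e3 : v₁ᴴ * (1 - p) = 0 := by
        rw [Matrix.mul_sub, Matrix.mul_one, hv1Hp, sub_self]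
      rw [e1, e2, e3, h11]; abel
    have hwHv2 : wᴴ * v₂ = 0 := by
      rw [hwH, Matrix.add_mul, Matrix.sub_mul, Matrix.one_mul, hpv2, sub_self, h12, add_zero]
    have hv2Hw : v₂ᴴ * w = 0 := by
      rw [hw, Matrix.mul_add, Matrix.mul_sub, Matrix.mul_one, hv2Hp, sub_self, h21, add_zero]
    set U : Matrix (Fin r) (Fin r ⊕ Fin k) A := Matrix.fromCols w v₂ with hUdef
    have hU1 : U * Uᴴ = 1 := by
      rw [hUdef, Matrix.conjTranspose_fromCols_eq_fromRows_conjTranspose,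
        Matrix.fromCols_mul_fromRows, hwwH]
      rw [add_assoc, hsum]; abel
    have hU2 : Uᴴ * U = 1 := by
      rw [hUdef, Matrix.conjTranspose_fromCols_eq_fromRows_conjTranspose,
        Matrix.fromRows_mul_fromCols, hwHw, hwHv2, hv2Hw, h22, Matrix.fromBlocks_one]
    -- transport along Fin r ⊕ Fin k ≃ Fin (r + k)
    set e : Fin (r + k) ≃ Fin r ⊕ Fin k := finSumFinEquiv.symm with he
    have : r = r + k := by
      apply hIBN
      refine ⟨U.submatrix id e, ?_, ?_⟩
      · rw [Matrix.conjTranspose_submatrix, Matrix.submatrix_mul_equiv, hU1,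
          Matrix.submatrix_id_id]
      · rw [Matrix.conjTranspose_submatrix,
          ← Matrix.submatrix_mul Uᴴ U ⇑e id ⇑e Function.bijective_id,
          hU2, Matrix.submatrix_one_equiv]
    omega
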